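/- Let n ≥ 1 and ℓ ≥ 1 be integers and let p be a real number with 0 < p ≤ 1/2; set q := 1 − p and α := p/q. Then μ_p(F^ℓ) ≤ α^ℓ, and consequently μ_p(tilde{F}^ℓ) ≤ α^{ℓ+1}. -/

import Mathlib

open Finset

open scoped Classical

noncomputable section

/-- The `p`-weight of a family of subsets of `[n] = {1,…,n}`. -/
def mu (n : ℕ) (p : ℝ) (𝓕 : Finset (Finset ℕ)) : ℝ :=
  ∑ F ∈ 𝓕, p ^ F.card * (1 - p) ^ (n - F.card)

/-- Two families are cross `t`-intersecting. -/
def CrossIntersecting (t : ℕ) (𝓐 𝓑 : Finset (Finset ℕ)) : Prop :=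
  ∀ A ∈ 𝓐, ∀ B ∈ 𝓑, t ≤ (A ∩ B).card

/-- The Frankl family `F_i^ℓ = {F ⊆ [n] : |F ∩ [ℓ+2i]| ≥ ℓ+i}`. -/
def FF (n ℓ i : ℕ) : Finset (Finset ℕ) :=
  (Finset.Icc 1 n).powerset.filter fun F => ℓ + i ≤ (F ∩ Finset.Icc 1 (ℓ + 2 * i)).card

/-- `F` reaches level `ℓ`: there is `0 ≤ j ≤ n` with `2|F ∩ [j]| ≥ j + ℓ`. -/
def Reaches (n ℓ : ℕ) (F : Finset ℕ) : Prop :=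
  ∃ j ≤ n, j + ℓ ≤ 2 * (F ∩ Finset.Icc 1 j).card

/-- The number of steps `0 ≤ j ≤ n` at which `F` hits level `ℓ`, i.e. `2|F ∩ [j]| = j + ℓ`. -/
def hitCount (n ℓ : ℕ) (F : Finset ℕ) : ℕ :=
  ((Finset.range (n + 1)).filter fun j => 2 * (F ∩ Finset.Icc 1 j).card = j + ℓ).card

/-- `F^ℓ`: all subsets of `[n]` reaching level `ℓ`. -/
def Fwalk (n ℓ : ℕ) : Finset (Finset ℕ) :=
  (Finset.Icc 1 n).powerset.filter fun F => Reaches n ℓ F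

/-- `tilde F^ℓ`: all subsets of `[n]` reaching level `ℓ+1`. -/
def Ftilde (n ℓ : ℕ) : Finset (Finset ℕ) :=
  (Finset.Icc 1 n).powerset.filter fun F => Reaches n (ℓ + 1) F

/-- `hat F^ℓ`: subsets not reaching level `ℓ+1` and hitting level `ℓ` exactly once. -/
def Fhat (n ℓ : ℕ) : Finset (Finset ℕ) :=
  (Finset.Icc 1 n).powerset.filter fun F => ¬ Reaches n (ℓ + 1) F ∧ hitCount n ℓ F = 1

/-- `ddot F^ℓ`: subsets not reaching level `ℓ+1` and hitting level `ℓ` at least twice. -/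
def Fddot (n ℓ : ℕ) : Finset (Finset ℕ) :=
  (Finset.Icc 1 n).powerset.filter fun F => ¬ Reaches n (ℓ + 1) F ∧ 2 ≤ hitCount n ℓ F

/-- The `(i,j)`-shift of a single set `F`, relative to the family `𝓕`. -/
def shiftSet (i j : ℕ) (𝓕 : Finset (Finset ℕ)) (F : Finset ℕ) : Finset ℕ :=
  if j ∈ F ∧ i ∉ F ∧ insert i (F.erase j) ∉ 𝓕 then insert i (F.erase j) else F

/-- The `(i,j)`-shift `s_{ij}(𝓕)` of a family `𝓕`. -/
def shiftFam (i j : ℕ) (𝓕 : Finset (Finset ℕ)) : Finset (Finset ℕ) :=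
  𝓕.image (shiftSet i j 𝓕)

/-- A family is shifted if all shifts `s_{ij}`, `1 ≤ i < j ≤ n`, fix it. -/
def Shifted (n : ℕ) (𝓕 : Finset (Finset ℕ)) : Prop :=
  ∀ i j : ℕ, 1 ≤ i → i < j → j ≤ n → shiftFam i j 𝓕 = 𝓕

/-- A family of subsets of `[n]` is inclusion maximal. -/
def InclMax (n : ℕ) (𝓕 : Finset (Finset ℕ)) : Prop :=
  ∀ F ∈ 𝓕, ∀ F' : Finset ℕ, F ⊆ F' → F' ⊆ Finset.Icc 1 n → F' ∈ 𝓕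

/-- `λ(𝓕)`: the largest `λ ≥ 0` such that every member of `𝓕` reaches level `λ`. -/
def lam (n : ℕ) (𝓕 : Finset (Finset ℕ)) : ℕ :=
  Nat.findGreatest (fun ℓ => ∀ F ∈ 𝓕, Reaches n ℓ F) n

/-- Two families of subsets of `[n]` are isomorphic via a permutation of `[n]`. -/
def Isom (n : ℕ) (𝓖₁ 𝓖₂ : Finset (Finset ℕ)) : Prop :=
  ∃ σ : Equiv.Perm ℕ, (∀ k ∈ Finset.Icc 1 n, σ k ∈ Finset.Icc 1 n) ∧
    𝓖₁ = 𝓖₂.image fun G => G.image σ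

/-- The quantity `f(ℓ, i, p)` from Ahlswede–Khachatrian type estimates. -/
def fLP (ℓ i : ℕ) (p : ℝ) : ℝ :=
  (p / (1 - p)) ^ (ℓ + 1) +
    (Nat.choose (ℓ + 2 * i) i : ℝ) * ((ℓ + 1 : ℝ) / (ℓ + i + 1)) * p ^ (ℓ + i) *
      (1 - p) ^ i * (1 - p / (1 - p))

/-- The walk `D_s^t(i) = [t−1] ∪ {t+s,…,t+2s} ∪ {t+2s+i+2k : k ≥ 1} ∩ [n]`. -/
def DD (n t s i : ℕ) : Finset ℕ :=
  Finset.Icc 1 (t - 1) ∪ Finset.Icc (t + s) (t + 2 * s) ∪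
    ((Finset.Icc 1 n).filter fun m => ∃ k ∈ Finset.Icc 1 n, m = t + 2 * s + i + 2 * k)

end

section AuxProof

variable {p : ℝ}

private lemma mu_powerset (n : ℕ) : mu n p ((Finset.Icc 1 n).powerset) = 1 := by
  unfold mu
  have h : ∀ t ∈ (Finset.Icc 1 n).powerset,
      p ^ t.card * (1 - p) ^ (n - t.card)
        = (∏ _i ∈ t, p) * ∏ _i ∈ (Finset.Icc 1 n) \ t, (1 - p) := by
    intro t ht
    rw [Finset.prod_const, Finset.prod_const,
      Finset.card_sdiff_of_subset (Finset.mem_powerset.1 ht), Nat.card_Icc]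
    norm_num
  rw [Finset.sum_congr rfl h, ← Finset.prod_add]
  simp

private def phi (F : Finset ℕ) : Finset ℕ := (F.erase 1).image (· - 1)

private lemma phi_inter (F : Finset ℕ) (j : ℕ) :
    phi F ∩ Finset.Icc 1 j = ((F ∩ Finset.Icc 1 (j + 1)).erase 1).image (· - 1) := by
  ext a
  simp only [phi, Finset.mem_inter, Finset.mem_image, Finset.mem_erase, Finset.mem_Icc]
  constructor
  · rintro ⟨⟨b, ⟨hb1, hbF⟩, rfl⟩, ha1, haj⟩
    exact ⟨b, ⟨hb1, hbF, by omega, by omega⟩, rfl⟩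
  · rintro ⟨b, ⟨hb1, hbF, hb1', hbj⟩, rfl⟩
    exact ⟨⟨b, ⟨hb1, hbF⟩, rfl⟩, by omega, by omega⟩

private lemma phi_count (F : Finset ℕ) (j : ℕ) :
    (phi F ∩ Finset.Icc 1 j).card + (if 1 ∈ F then 1 else 0)
      = (F ∩ Finset.Icc 1 (j + 1)).card := by
  rw [phi_inter]
  rw [Finset.card_image_of_injOn ?inj]
  case inj =>
    intro a ha b hb hab
    simp only [Finset.coe_erase, Set.mem_diff, Finset.mem_coe, Finset.mem_inter,
      Finset.mem_Icc, Set.mem_singleton_iff] at ha hb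
    have hab' : a - 1 = b - 1 := hab
    omega
  by_cases h1 : 1 ∈ F
  · have hm : 1 ∈ F ∩ Finset.Icc 1 (j + 1) := by
      simp only [Finset.mem_inter, Finset.mem_Icc]
      exact ⟨h1, le_refl 1, by omega⟩
    rw [if_pos h1, Finset.card_erase_of_mem hm]
    have := Finset.card_pos.2 ⟨1, hm⟩
    omega
  · have hm : 1 ∉ F ∩ Finset.Icc 1 (j + 1) := by
      simp [h1]
    rw [if_neg h1, Finset.erase_eq_of_notMem hm]
    omega

private lemma phi_subset {F : Finset ℕ} {n : ℕ} (hF : F ⊆ Finset.Icc 1 (n + 1)) :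
    phi F ⊆ Finset.Icc 1 n := by
  intro a ha
  simp only [phi, Finset.mem_image, Finset.mem_erase] at ha
  obtain ⟨b, ⟨hb1, hbF⟩, rfl⟩ := ha
  have := hF hbF
  simp only [Finset.mem_Icc] at this ⊢
  omega

private lemma phi_card {F : Finset ℕ} {n : ℕ} (hF : F ⊆ Finset.Icc 1 (n + 1)) :
    (phi F).card + (if 1 ∈ F then 1 else 0) = F.card := by
  have h := phi_count F n
  rwa [Finset.inter_eq_left.2 (phi_subset hF), Finset.inter_eq_left.2 hF] at h

private lemma phi_recover {F : Finset ℕ} (hF : ∀ a ∈ F, 1 ≤ a) :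
    (phi F).image (· + 1) = F.erase 1 := by
  rw [phi, Finset.image_image]
  have h : ∀ a ∈ F.erase 1, ((· + 1) ∘ (· - 1)) a = id a := by
    intro a ha
    have h1 := Finset.mem_erase.1 ha
    have h2 := hF a h1.2
    simp only [Function.comp_apply, id_eq]
    omega
  rw [Finset.image_congr h, Finset.image_id]

private lemma phi_inj_mem {F G : Finset ℕ} (hF : ∀ a ∈ F, 1 ≤ a) (hG : ∀ a ∈ G, 1 ≤ a)
    (h1F : 1 ∈ F) (h1G : 1 ∈ G) (h : phi F = phi G) : F = G := by
  calc F = insert 1 (F.erase 1) := (Finset.insert_erase h1F).symm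
    _ = insert 1 ((phi F).image (· + 1)) := by rw [phi_recover hF]
    _ = insert 1 ((phi G).image (· + 1)) := by rw [h]
    _ = G := by rw [phi_recover hG, Finset.insert_erase h1G]

private lemma phi_inj_not_mem {F G : Finset ℕ} (hF : ∀ a ∈ F, 1 ≤ a) (hG : ∀ a ∈ G, 1 ≤ a)
    (h1F : 1 ∉ F) (h1G : 1 ∉ G) (h : phi F = phi G) : F = G := by
  calc F = F.erase 1 := (Finset.erase_eq_of_notMem h1F).symm
    _ = (phi F).image (· + 1) := (phi_recover hF).symm
    _ = (phi G).image (· + 1) := by rw [h]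
    _ = G := by rw [phi_recover hG, Finset.erase_eq_of_notMem h1G]

private lemma reaches_mem {F : Finset ℕ} {m k : ℕ} (h1 : 1 ∈ F) :
    Reaches (m + 1) (k + 1) F ↔ Reaches m k (phi F) := by
  constructor
  · rintro ⟨j, hj, hreach⟩
    match j with
    | 0 =>
      rw [Finset.Icc_eq_empty (by omega), Finset.inter_empty, Finset.card_empty] at hreach
      omega
    | j' + 1 =>
      refine ⟨j', by omega, ?_⟩
      have hc := phi_count F j'
      rw [if_pos h1] at hc
      omega
  · rintro ⟨j', hj', hreach⟩
    refine ⟨j' + 1, by omega, ?_⟩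
    have hc := phi_count F j'
    rw [if_pos h1] at hc
    omega

private lemma reaches_not_mem {F : Finset ℕ} {m k : ℕ} (h1 : 1 ∉ F) :
    Reaches (m + 1) (k + 1) F ↔ Reaches m (k + 2) (phi F) := by
  constructor
  · rintro ⟨j, hj, hreach⟩
    match j with
    | 0 =>
      rw [Finset.Icc_eq_empty (by omega), Finset.inter_empty, Finset.card_empty] at hreach
      omega
    | j' + 1 =>
      refine ⟨j', by omega, ?_⟩
      have hc := phi_count F j'
      rw [if_neg h1] at hc
      omega
  · rintro ⟨j', hj', hreach⟩
    refine ⟨j' + 1, by omega, ?_⟩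
    have hc := phi_count F j'
    rw [if_neg h1] at hc
    omega

private lemma main_bound {p : ℝ} (hp : 0 < p) (hp' : p ≤ 1 / 2) :
    ∀ n ℓ : ℕ, mu n p (Fwalk n ℓ) ≤ (p / (1 - p)) ^ ℓ := by
  have hq : 0 < 1 - p := by linarith
  have hα : 0 ≤ p / (1 - p) := div_nonneg hp.le hq.le
  have hterm : ∀ (n : ℕ) (F : Finset ℕ), 0 ≤ p ^ F.card * (1 - p) ^ (n - F.card) :=
    fun n F => mul_nonneg (pow_nonneg hp.le _) (pow_nonneg hq.le _)
  have hle1 : ∀ n ℓ, mu n p (Fwalk n ℓ) ≤ 1 := by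
    intro n ℓ
    calc mu n p (Fwalk n ℓ) ≤ mu n p ((Finset.Icc 1 n).powerset) :=
          Finset.sum_le_sum_of_subset_of_nonneg (Finset.filter_subset _ _)
            (fun F _ _ => hterm n F)
      _ = 1 := mu_powerset n
  intro n
  induction n with
  | zero =>
    intro ℓ
    match ℓ with
    | 0 => simpa using hle1 0 0
    | k + 1 =>
      have hemp : Fwalk 0 (k + 1) = ∅ := by
        rw [Finset.eq_empty_iff_forall_notMem]
        intro F hF
        simp only [Fwalk, Finset.mem_filter] at hF
        obtain ⟨j, hj, hr⟩ := hF.2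
        interval_cases j
        rw [Finset.Icc_eq_empty (by omega), Finset.inter_empty, Finset.card_empty] at hr
        omega
      rw [hemp]
      simpa [mu] using pow_nonneg hα (k + 1)
  | succ m ih =>
    intro ℓ
    match ℓ with
    | 0 => simpa using hle1 (m + 1) 0
    | k + 1 =>
      set A := (Fwalk (m + 1) (k + 1)).filter (fun F => 1 ∈ F) with hA
      set B := (Fwalk (m + 1) (k + 1)).filter (fun F => 1 ∉ F) with hB
      have hsplit : mu (m + 1) p (Fwalk (m + 1) (k + 1)) =
          (∑ F ∈ A, p ^ F.card * (1 - p) ^ (m + 1 - F.card)) +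
          (∑ F ∈ B, p ^ F.card * (1 - p) ^ (m + 1 - F.card)) := by
        rw [hA, hB, Finset.sum_filter_add_sum_filter_not]
        rfl
      have hmemA : ∀ F ∈ A, (F ⊆ Finset.Icc 1 (m + 1) ∧ Reaches (m + 1) (k + 1) F) ∧ 1 ∈ F := by
        intro F hF
        simp only [hA, Fwalk, Finset.mem_filter, Finset.mem_powerset] at hF
        exact hF
      have hmemB : ∀ F ∈ B, (F ⊆ Finset.Icc 1 (m + 1) ∧ Reaches (m + 1) (k + 1) F) ∧ 1 ∉ F := by
        intro F hF
        simp only [hB, Fwalk, Finset.mem_filter, Finset.mem_powerset] at hF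
        exact hF
      have hone : ∀ F : Finset ℕ, F ⊆ Finset.Icc 1 (m + 1) → ∀ a ∈ F, 1 ≤ a := by
        intro F hF a ha
        exact (Finset.mem_Icc.1 (hF ha)).1
      have hwalkmem : ∀ (k' : ℕ) (G : Finset ℕ), G ⊆ Finset.Icc 1 m → Reaches m k' G →
          G ∈ Fwalk m k' := by
        intro k' G h1 h2
        simp only [Fwalk, Finset.mem_filter, Finset.mem_powerset]
        exact ⟨h1, h2⟩
      -- A sum
      have hinjA : ∀ F ∈ A, ∀ G ∈ A, phi F = phi G → F = G := by
        intro F hF G hG h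
        exact phi_inj_mem (hone F (hmemA F hF).1.1) (hone G (hmemA G hG).1.1)
          (hmemA F hF).2 (hmemA G hG).2 h
      have hAsum : (∑ F ∈ A, p ^ F.card * (1 - p) ^ (m + 1 - F.card))
          ≤ p * mu m p (Fwalk m k) := by
        have step1 : (∑ F ∈ A, p ^ F.card * (1 - p) ^ (m + 1 - F.card))
            = ∑ F ∈ A, p * (p ^ (phi F).card * (1 - p) ^ (m - (phi F).card)) := by
          apply Finset.sum_congr rfl
          intro F hF
          obtain ⟨⟨hsub, _⟩, h1F⟩ := hmemA F hF
          have hc := phi_card hsub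
          rw [if_pos h1F] at hc
          have hcard : F.card ≤ m + 1 := by
            have h' := Finset.card_le_card hsub
            rwa [Nat.card_Icc, Nat.add_sub_cancel] at h'
          have h1 : F.card = (phi F).card + 1 := by omega
          have h2 : m + 1 - F.card = m - (phi F).card := by omega
          rw [h2, h1, pow_succ]
          ring
        rw [step1]
        have step2 : (∑ F ∈ A, p * (p ^ (phi F).card * (1 - p) ^ (m - (phi F).card)))
            = p * ∑ G ∈ A.image phi, p ^ G.card * (1 - p) ^ (m - G.card) := by
          rw [Finset.mul_sum, Finset.sum_image hinjA]
        rw [step2]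
        apply mul_le_mul_of_nonneg_left _ hp.le
        apply Finset.sum_le_sum_of_subset_of_nonneg _ (fun F _ _ => hterm m F)
        intro G hG
        obtain ⟨F, hF, rfl⟩ := Finset.mem_image.1 hG
        obtain ⟨⟨hsub, hre⟩, h1F⟩ := hmemA F hF
        exact hwalkmem k (phi F) (phi_subset hsub) ((reaches_mem h1F).1 hre)
      -- B sum
      have hinjB : ∀ F ∈ B, ∀ G ∈ B, phi F = phi G → F = G := by
        intro F hF G hG h
        exact phi_inj_not_mem (hone F (hmemB F hF).1.1) (hone G (hmemB G hG).1.1)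
          (hmemB F hF).2 (hmemB G hG).2 h
      have hBsum : (∑ F ∈ B, p ^ F.card * (1 - p) ^ (m + 1 - F.card))
          ≤ (1 - p) * mu m p (Fwalk m (k + 2)) := by
        have step1 : (∑ F ∈ B, p ^ F.card * (1 - p) ^ (m + 1 - F.card))
            = ∑ F ∈ B, (1 - p) * (p ^ (phi F).card * (1 - p) ^ (m - (phi F).card)) := by
          apply Finset.sum_congr rfl
          intro F hF
          obtain ⟨⟨hsub, _⟩, h1F⟩ := hmemB F hF
          have hc := phi_card hsub
          rw [if_neg h1F] at hc
          have hcard : (phi F).card ≤ m := by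
            have h' := Finset.card_le_card (phi_subset hsub)
            rwa [Nat.card_Icc, Nat.add_sub_cancel] at h'
          have h1 : F.card = (phi F).card := by omega
          have h2 : m + 1 - F.card = (m - (phi F).card) + 1 := by omega
          rw [h2, h1, pow_succ]
          ring
        rw [step1]
        have step2 : (∑ F ∈ B, (1 - p) * (p ^ (phi F).card * (1 - p) ^ (m - (phi F).card)))
            = (1 - p) * ∑ G ∈ B.image phi, p ^ G.card * (1 - p) ^ (m - G.card) := by
          rw [Finset.mul_sum, Finset.sum_image hinjB]
        rw [step2]
        apply mul_le_mul_of_nonneg_left _ hq.le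
        apply Finset.sum_le_sum_of_subset_of_nonneg _ (fun F _ _ => hterm m F)
        intro G hG
        obtain ⟨F, hF, rfl⟩ := Finset.mem_image.1 hG
        obtain ⟨⟨hsub, hre⟩, h1F⟩ := hmemB F hF
        exact hwalkmem (k + 2) (phi F) (phi_subset hsub) ((reaches_not_mem h1F).1 hre)
      have halg : p * (p / (1 - p)) ^ k + (1 - p) * (p / (1 - p)) ^ (k + 2)
          = (p / (1 - p)) ^ (k + 1) := by
        have h2 : (1 : ℝ) - p ≠ 0 := ne_of_gt hq
        have ha : (1 - p) * (p / (1 - p)) = p := by field_simp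
        linear_combination ((p / (1 - p)) ^ k * (p / (1 - p) - 1)) * ha
      calc mu (m + 1) p (Fwalk (m + 1) (k + 1)) = _ + _ := hsplit
        _ ≤ p * mu m p (Fwalk m k) + (1 - p) * mu m p (Fwalk m (k + 2)) :=
            add_le_add hAsum hBsum
        _ ≤ p * (p / (1 - p)) ^ k + (1 - p) * (p / (1 - p)) ^ (k + 2) :=
            add_le_add (mul_le_mul_of_nonneg_left (ih k) hp.le)
              (mul_le_mul_of_nonneg_left (ih (k + 2)) hq.le)
        _ = (p / (1 - p)) ^ (k + 1) := halg

end AuxProof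

/-- `μ_p(F^ℓ) ≤ α^ℓ` and `μ_p(tilde F^ℓ) ≤ α^{ℓ+1}`. -/
theorem statement_2 (n ℓ : ℕ) (hn : 1 ≤ n) (hl : 1 ≤ ℓ) (p : ℝ)
    (hp : 0 < p) (hp' : p ≤ 1 / 2) :
    mu n p (Fwalk n ℓ) ≤ (p / (1 - p)) ^ ℓ ∧
      mu n p (Ftilde n ℓ) ≤ (p / (1 - p)) ^ (ℓ + 1) := by
  have heq : Ftilde n ℓ = Fwalk n (ℓ + 1) := rfl
  exact ⟨main_bound hp hp' n ℓ, heq ▸ main_bound hp hp' n (ℓ + 1)⟩
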